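/- (Cancellation property of the forest category, part of Proposition 3.6.) Let f be a planar rooted binary tree with n leaves, and let p and q be binary forests each having n roots. If the composite trees p∘f and q∘f are equal, then p = q. -/
import Mathlib


/-- A planar rooted binary tree: a leaf, or a node with two subtrees. -/
inductive PTree : Type
  | leaf : PTree
  | node : PTree → PTree → PTree

/-- The number of leaves of a planar binary tree. -/
def PTree.leaves : PTree → ℕ
  | .leaf => 1
  | .node l r => l.leaves + r.leaves

/-- Graft the trees of a forest `f` onto the leaves of a tree `t`, from left to
right; returns the grafted tree together with the unused remainder of `f`. -/
def PTree.graft : PTree → List PTree → PTree × List PTree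
  | .leaf, t :: f => (t, f)
  | .leaf, [] => (.leaf, [])
  | .node l r, f =>
      let (l', f') := l.graft f
      let (r', f'') := r.graft f'
      (.node l' r', f'')

/-- The composite forest `f ∘ g` obtained by stacking the forest `f` on top of
the forest `g`, i.e. grafting the `i`-th tree of `f` onto the `i`-th leaf
of `g`. -/
def forestComp (f g : List PTree) : List PTree :=
  match g with
  | [] => []
  | t :: g' =>
      let (t', f') := t.graft f
      t' :: forestComp f' g'

lemma graft_snd_length : ∀ (t : PTree) (p : List PTree), t.leaves ≤ p.length →
    (t.graft p).2.length = p.length - t.leaves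
  | .leaf, a :: p, _ => by simp [PTree.graft, PTree.leaves]
  | .leaf, [], h => by simp [PTree.leaves] at h
  | .node l r, p, h => by
      have hl : l.leaves ≤ p.length := by
        simp [PTree.leaves] at h; omega
      have h1 := graft_snd_length l p hl
      have hr : r.leaves ≤ (l.graft p).2.length := by
        rw [h1]; simp [PTree.leaves] at h; omega
      have h2 := graft_snd_length r _ hr
      simp only [PTree.graft]
      rw [h2, h1]
      simp [PTree.leaves]; omega

lemma graft_inj : ∀ (t : PTree) (p q : List PTree), t.leaves ≤ p.length →
    p.length = q.length → t.graft p = t.graft q → p = q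
  | .leaf, a :: p, b :: q, _, hlen, h => by
      simp [PTree.graft] at h
      simp [h.1, h.2]
  | .leaf, [], _, h, _, _ => by simp [PTree.leaves] at h
  | .leaf, _ :: _, [], _, hlen, _ => by simp at hlen
  | .node l r, p, q, h, hlen, heq => by
      have hl : l.leaves ≤ p.length := by simp [PTree.leaves] at h; omega
      have hl' : l.leaves ≤ q.length := hlen ▸ hl
      have h1 := graft_snd_length l p hl
      have h1' := graft_snd_length l q hl'
      simp only [PTree.graft] at heq
      have h2 := congrArg Prod.fst heq
      have h3 := congrArg Prod.snd heq
      simp only [PTree.node.injEq] at h2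
      have hfst : (l.graft p).1 = (l.graft q).1 := h2.1
      have hsnd2 : (r.graft (l.graft p).2) = (r.graft (l.graft q).2) :=
        Prod.ext h2.2 h3
      have hrlen : r.leaves ≤ (l.graft p).2.length := by
        rw [h1]; simp [PTree.leaves] at h; omega
      have hlen2 : (l.graft p).2.length = (l.graft q).2.length := by
        rw [h1, h1', hlen]
      have hmid := graft_inj r _ _ hrlen hlen2 hsnd2
      exact graft_inj l p q hl hlen (Prod.ext hfst hmid)

/-- Cancellation: if `f` is a tree with `n` leaves and `p`, `q` are forests
with `n` roots such that `p ∘ f = q ∘ f`, then `p = q`. -/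
theorem forest_cancellation (n : ℕ) (f : PTree) (hf : f.leaves = n)
    (p q : List PTree) (hp : p.length = n) (hq : q.length = n)
    (h : forestComp p [f] = forestComp q [f]) : p = q := by
  simp only [forestComp] at h
  have hfst : (f.graft p).1 = (f.graft q).1 := by
    exact List.head_eq_of_cons_eq h
  have hle : f.leaves ≤ p.length := by omega
  have hsnd : (f.graft p).2 = (f.graft q).2 := by
    have h1 := graft_snd_length f p hle
    have h2 := graft_snd_length f q (by omega)
    have e1 : (f.graft p).2.length = 0 := by omega
    have e2 : (f.graft q).2.length = 0 := by omega
    rw [List.length_eq_zero_iff] at e1 e2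
    rw [e1, e2]
  exact graft_inj f p q hle (by omega) (Prod.ext hfst hsnd)
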